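/- The space H(A₁) is σ-compact, yet the set B₁ = ℝ \ A₁ is not a G_δ-subset of ℝ with the Euclidean topology. (Hence the implication 'ℝ \ A countable and G_δ in the real line implies H(A) σ-compact' is not invertible.) -/

import Mathlib

open Set TopologicalSpace Topology

/-- The Hattori topology τ(A) on ℝ: generated by the Euclidean open sets together with
all sets [x, x+ε) with x ∈ ℝ \ A and ε > 0. -/
def hattori (A : Set ℝ) : TopologicalSpace ℝ :=
  TopologicalSpace.generateFrom
    ({s : Set ℝ | IsOpen s} ∪ {s : Set ℝ | ∃ x ∉ A, ∃ ε > 0, s = Set.Ico x (x + ε)})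

/-- `B₁`: the set of left endpoints of the closed intervals appearing in the standard
middle-thirds construction of the Cantor set. -/
def B1 : Set ℝ :=
  {x | ∃ n : ℕ, ∃ c : ℕ → ℝ, (∀ i, c i = 0 ∨ c i = 2) ∧
    x = ∑ i ∈ Finset.range n, c i / 3 ^ (i + 1)}

/-- `A₁ = ℝ \ B₁`. -/
def A1 : Set ℝ := B1ᶜ

open Filter

noncomputable section

namespace HatAux

/-- digit sequence as reals -/
def dig (f : ℕ → Bool) (i : ℕ) : ℝ := if f i then 2 else 0

lemma dig_nonneg (f i) : 0 ≤ dig f i := by unfold dig; split <;> norm_num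
lemma dig_le_two (f i) : dig f i ≤ 2 := by unfold dig; split <;> norm_num

/-- partial sum -/
def S (f : ℕ → Bool) (n : ℕ) : ℝ := ∑ i ∈ Finset.range n, dig f i / 3 ^ (i + 1)

/-- full sum (element of Cantor set) -/
def gC (f : ℕ → Bool) : ℝ := ∑' i, dig f i / 3 ^ (i + 1)

lemma summable_geo : Summable (fun i : ℕ => 2 / (3:ℝ) ^ (i + 1)) := by
  have : (fun i : ℕ => 2 / (3:ℝ) ^ (i + 1)) = fun i : ℕ => (2/3) * (1/3:ℝ) ^ i := by
    funext i; rw [pow_succ, one_div_pow]; ring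
  rw [this]
  exact (summable_geometric_of_lt_one (by norm_num) (by norm_num)).mul_left _

lemma term_nonneg (f : ℕ → Bool) (i : ℕ) : 0 ≤ dig f i / 3 ^ (i + 1) := by
  have := dig_nonneg f i; positivity

lemma term_le (f : ℕ → Bool) (i : ℕ) : dig f i / 3 ^ (i + 1) ≤ 2 / (3:ℝ) ^ (i + 1) := by
  gcongr
  exact dig_le_two f i

lemma summable_dig (f : ℕ → Bool) : Summable (fun i => dig f i / 3 ^ (i + 1)) :=
  Summable.of_nonneg_of_le (term_nonneg f) (term_le f) summable_geo

/-- value of the shifted geometric tail. -/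
lemma tsum_tail (j : ℕ) : ∑' i : ℕ, 2 / (3:ℝ) ^ (i + j + 1 + 1) = 1 / 3 ^ (j + 1) := by
  have h1 : ∀ i : ℕ, 2 / (3:ℝ) ^ (i + j + 1 + 1) = (2 / 3 ^ (j + 2)) * (1/3) ^ i := by
    intro i
    rw [show i + j + 1 + 1 = (j + 2) + i by ring, pow_add]
    field_simp
    rw [← mul_pow]; norm_num
  simp only [h1]
  rw [tsum_mul_left, tsum_geometric_of_lt_one (by norm_num) (by norm_num)]
  rw [show (j:ℕ) + 2 = (j + 1) + 1 by ring, pow_succ]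
  field_simp
  ring

lemma tail_nonneg (f : ℕ → Bool) (j : ℕ) : 0 ≤ ∑' i : ℕ, dig f (i + (j+1)) / 3 ^ (i + (j+1) + 1) :=
  tsum_nonneg fun i => term_nonneg f _

lemma tail_le (f : ℕ → Bool) (j : ℕ) :
    ∑' i : ℕ, dig f (i + (j+1)) / 3 ^ (i + (j+1) + 1) ≤ 1 / 3 ^ (j + 1) := by
  rw [← tsum_tail j]
  refine ((summable_dig f).comp_injective (add_left_injective (j+1))).tsum_le_tsum (fun i => ?_) ?_
  · have := term_le f (i + (j+1))
    simpa [show i + (j+1) = i + j + 1 by ring] using this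
  · have := summable_geo.comp_injective (add_left_injective (j+1))
    simpa [Function.comp_def, show ∀ i, i + (j+1) = i + j + 1 from fun i => by ring] using this

end HatAux

namespace HatAux

lemma gC_split (w : ℕ → Bool) (j : ℕ) :
    gC w = (∑ i ∈ Finset.range (j+1), dig w i / 3 ^ (i+1)) +
      ∑' i : ℕ, dig w (i + (j+1)) / 3 ^ ((i + (j+1)) + 1) :=
  (Summable.sum_add_tsum_nat_add (j+1) (summable_dig w)).symm

lemma gC_cmp {u v : ℕ → Bool} {j : ℕ} (h : ∀ i < j, u i = v i)
    (hu : u j = false) (hv : v j = true) : gC u + 1 / 3 ^ (j+1) ≤ gC v := by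
  rw [gC_split u j, gC_split v j]
  have hA : ∑ i ∈ Finset.range (j+1), dig v i / 3 ^ (i+1)
      = (∑ i ∈ Finset.range (j+1), dig u i / 3 ^ (i+1)) + 2 / 3 ^ (j+1) := by
    rw [Finset.sum_range_succ, Finset.sum_range_succ]
    have : ∑ i ∈ Finset.range j, dig v i / 3 ^ (i+1)
        = ∑ i ∈ Finset.range j, dig u i / 3 ^ (i+1) := by
      refine Finset.sum_congr rfl fun i hi => ?_
      rw [dig, dig, h i (Finset.mem_range.mp hi)]
    rw [this, dig, dig, hu, hv]
    norm_num
  rw [hA]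
  have h1 := tail_le u j
  have h2 := tail_nonneg v j
  have h4 : (2:ℝ)/3^(j+1) = 2*(1/3^(j+1)) := by ring
  linarith [h1, h2, h4]

lemma gC_lt_of_lt {u v : ℕ → Bool} {n : ℕ} (hn : ∀ i, u i = true → i < n)
    (h : gC v < gC u) : gC v + 1 / 3 ^ n ≤ gC u := by
  classical
  have hne : ∃ j, u j ≠ v j := by
    by_contra hc
    push_neg at hc
    have : u = v := funext hc
    rw [this] at h; exact lt_irrefl _ h
  set j := Nat.find hne with hjdef
  have hj : u j ≠ v j := Nat.find_spec hne
  have hlt : ∀ i < j, u i = v i := fun i hi => by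
    by_contra hc; exact Nat.find_min hne hi hc
  have key : ∀ a b : ℕ → Bool, (∀ i < j, a i = b i) → a j = false → b j = true →
      gC a + 1 / 3 ^ (j+1) ≤ gC b := fun a b h1 h2 h3 => gC_cmp h1 h2 h3
  rcases Bool.eq_false_or_eq_true (u j) with hu | hu
  all_goals {
    first
    | (have hv : v j = true := by revert hj; rw [hu]; cases v j <;> simp
       have := key u v hlt hu hv
       have h3 : (0:ℝ) < 1 / 3 ^ (j+1) := by positivity
       linarith)
    | (have hv : v j = false := by revert hj; rw [hu]; cases v j <;> simp
       have hjn : j < n := hn j hu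
       have := key v u (fun i hi => (hlt i hi).symm) hv hu
       have hmono : (1:ℝ) / 3 ^ n ≤ 1 / 3 ^ (j+1) := by
         gcongr
         · norm_num
         · omega
       linarith) }

/-- truncation -/
def cut (f : ℕ → Bool) (n : ℕ) : ℕ → Bool := fun i => f i && decide (i < n)

lemma S_eq_gC_cut (f : ℕ → Bool) (n : ℕ) : S f n = gC (cut f n) := by
  rw [gC, tsum_eq_sum (s := Finset.range n) (f := fun i => dig (cut f n) i / 3 ^ (i+1))]
  · refine Finset.sum_congr rfl fun i hi => ?_
    have hi' : i < n := Finset.mem_range.mp hi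
    simp [dig, cut, hi']
  · intro i hi
    have hi' : ¬ i < n := fun h => hi (Finset.mem_range.mpr h)
    simp [dig, cut, hi']

lemma sep {f : ℕ → Bool} {n : ℕ} {y : ℝ} (hy : y ∈ Set.range gC) (h : y < S f n) :
    y + 1 / 3 ^ n ≤ S f n := by
  obtain ⟨v, rfl⟩ := hy
  rw [S_eq_gC_cut] at h ⊢
  refine gC_lt_of_lt (fun i hi => ?_) h
  simp only [cut, Bool.and_eq_true, decide_eq_true_eq] at hi
  exact hi.2

end HatAux

namespace HatAux

lemma continuous_gC : Continuous gC := by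
  refine continuous_tsum (f := fun i (d : ℕ → Bool) => dig d i / 3 ^ (i+1))
    (fun i => ?_) summable_geo (fun i d => ?_)
  · exact (continuous_of_discreteTopology (f := fun b : Bool => (if b then (2:ℝ) else 0) / 3 ^ (i+1))).comp
      (continuous_apply i)
  · rw [Real.norm_eq_abs, abs_div, abs_of_nonneg (dig_nonneg d i), abs_of_nonneg (by positivity)]
    exact term_le d i

lemma isClosed_range_gC : IsClosed (Set.range gC) :=
  (isCompact_range continuous_gC).isClosed

lemma S_mem_range (f : ℕ → Bool) (n : ℕ) : S f n ∈ Set.range gC :=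
  ⟨cut f n, (S_eq_gC_cut f n).symm⟩

/-- Key fact: for every real `x` there is a uniform lower bound. -/
lemma factF (x : ℝ) : ∃ m : ℕ, ∀ (n : ℕ) (f : ℕ → Bool),
    x < S f n → 1 / 3 ^ n ≤ (m + 1 : ℝ) * (S f n - x) := by
  by_cases hx : x ∈ Set.range gC
  · refine ⟨0, fun n f h => ?_⟩
    have := sep hx h
    push_cast
    linarith
  · have hop : IsOpen (Set.range gC)ᶜ := isClosed_range_gC.isOpen_compl
    obtain ⟨ε, hε, hball⟩ := Metric.isOpen_iff.mp hop x hx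
    obtain ⟨m, hm⟩ := exists_nat_one_div_lt hε
    refine ⟨m, fun n f h => ?_⟩
    have hdist : ε ≤ S f n - x := by
      by_contra hc
      push_neg at hc
      have : S f n ∈ Metric.ball x ε := by
        rw [Real.ball_eq_Ioo]
        constructor <;> [linarith; linarith]
      exact (hball this) (S_mem_range f n)
    have h1 : (1:ℝ) / 3 ^ n ≤ 1 := by
      rw [div_le_one (by positivity)]
      exact one_le_pow₀ (by norm_num)
    have h2 : (1:ℝ) ≤ (m + 1) * ε := by
      rw [div_lt_iff₀ (by positivity)] at hm
      nlinarith
    have h3 : (m + 1 : ℝ) * ε ≤ (m + 1) * (S f n - x) := by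
      have : (0:ℝ) ≤ m + 1 := by positivity
      nlinarith
    linarith

end HatAux

end


noncomputable section
namespace HatAux

lemma mem_B1_iff {x : ℝ} : x ∈ B1 ↔ ∃ n : ℕ, ∃ f : ℕ → Bool, S f n = x := by
  constructor
  · rintro ⟨n, c, hc, rfl⟩
    classical
    refine ⟨n, fun i => decide (c i = 2), ?_⟩
    refine Finset.sum_congr rfl fun i _ => ?_
    rcases hc i with h | h <;> simp [dig, h]
  · rintro ⟨n, f, rfl⟩
    refine ⟨n, dig f, fun i => ?_, rfl⟩
    rw [dig]; split <;> [right; left] <;> rfl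

/-- Hattori-open sets have the expected local structure. -/
lemma hattori_nhds (A : Set ℝ) (U : Set ℝ)
    (hU : TopologicalSpace.GenerateOpen
      ({s : Set ℝ | IsOpen s} ∪ {s : Set ℝ | ∃ x ∉ A, ∃ ε > 0, s = Set.Ico x (x + ε)}) U) :
    ∀ x ∈ U, ∃ ε > 0, Set.Ico x (x + ε) ⊆ U ∧
      (x ∈ A → Set.Ioo (x - ε) (x + ε) ⊆ U) := by
  induction hU with
  | basic s hs =>
    intro x hx
    rcases hs with hs | ⟨x₀, hx₀, ε₀, hε₀, rfl⟩
    · obtain ⟨ε, hε, hball⟩ := Metric.isOpen_iff.mp hs.out x hx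
      rw [Real.ball_eq_Ioo] at hball
      exact ⟨ε, hε, fun y hy => hball ⟨by linarith [hy.1], hy.2⟩, fun _ => hball⟩
    · obtain ⟨hx1, hx2⟩ := hx
      refine ⟨min (x₀ + ε₀ - x) (if x = x₀ then 1 else x - x₀), ?_, ?_, ?_⟩
      · rcases eq_or_lt_of_le hx1 with h | h
        · simp [← h]; linarith
        · simp only [lt_min_iff]
          constructor
          · linarith
          · split <;> [norm_num; linarith]
      · intro y hy
        obtain ⟨hy1, hy2⟩ := hy
        constructor
        · linarith
        · have := min_le_left (x₀ + ε₀ - x) (if x = x₀ then 1 else x - x₀)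
          linarith
      · intro hxA
        have hxne : x ≠ x₀ := fun h => hx₀ (h ▸ hxA)
        have hxgt : x₀ < x := lt_of_le_of_ne hx1 (Ne.symm hxne)
        intro y hy
        obtain ⟨hy1, hy2⟩ := hy
        have e1 : (if x = x₀ then (1:ℝ) else x - x₀) = x - x₀ := if_neg hxne
        have h2 := min_le_left (x₀ + ε₀ - x) (if x = x₀ then 1 else x - x₀)
        have h3 := min_le_right (x₀ + ε₀ - x) (if x = x₀ then 1 else x - x₀)
        rw [e1] at h3 h2 hy1 hy2
        constructor
        · linarith
        · linarith
  | univ =>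
    intro x _
    exact ⟨1, by norm_num, fun y _ => trivial, fun _ y _ => trivial⟩
  | inter s t _ _ ihs iht =>
    intro x hx
    obtain ⟨ε₁, h1, hs1, hs2⟩ := ihs x hx.1
    obtain ⟨ε₂, h2, ht1, ht2⟩ := iht x hx.2
    refine ⟨min ε₁ ε₂, lt_min h1 h2, fun y hy => ?_, fun hA y hy => ?_⟩
    · have l1 := min_le_left ε₁ ε₂; have l2 := min_le_right ε₁ ε₂
      exact ⟨hs1 ⟨hy.1, by obtain ⟨a,b⟩ := hy; linarith⟩,
             ht1 ⟨hy.1, by obtain ⟨a,b⟩ := hy; linarith⟩⟩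
    · have l1 := min_le_left ε₁ ε₂; have l2 := min_le_right ε₁ ε₂
      obtain ⟨a, b⟩ := hy
      exact ⟨hs2 hA ⟨by linarith, by linarith⟩, ht2 hA ⟨by linarith, by linarith⟩⟩
  | sUnion ts _ ih =>
    intro x hx
    obtain ⟨t, ht, hxt⟩ := hx
    obtain ⟨ε, hε, h1, h2⟩ := ih t ht x hxt
    exact ⟨ε, hε, fun y hy => ⟨t, ht, h1 hy⟩, fun hA y hy => ⟨t, ht, h2 hA hy⟩⟩

lemma euclid_open_hattori (A : Set ℝ) {U : Set ℝ} (hU : IsOpen U) :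
    IsOpen[hattori A] U :=
  TopologicalSpace.GenerateOpen.basic U (Set.mem_union_left _ hU)

end HatAux
end

noncomputable section
namespace HatAux

/-- transfer of compactness to the Hattori topology for left-B-separated compacta -/
lemma isCompact_hattori (A K : Set ℝ) (hK : IsCompact K)
    (hsep : ∀ b ∉ A, ∃ δ > 0, Set.Ioo (b - δ) b ∩ K = ∅) :
    @IsCompact ℝ (hattori A) K := by
  classical
  refine @isCompact_of_finite_subcover ℝ (hattori A) K ?_
  intro ι U hUo hcov
  -- choose for each x in K a Euclidean neighborhood and an index
  have hch : ∀ x : K, ∃ (i : ι) (V : Set ℝ), IsOpen V ∧ (x:ℝ) ∈ V ∧ V ∩ K ⊆ U i := by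
    rintro ⟨x, hxK⟩
    obtain ⟨i, hxi⟩ := Set.mem_iUnion.mp (hcov hxK)
    obtain ⟨ε, hε, hIco, hIoo⟩ := hattori_nhds A (U i) (hUo i) x hxi
    by_cases hxA : x ∈ A
    · exact ⟨i, Set.Ioo (x - ε) (x + ε), isOpen_Ioo,
        Set.mem_Ioo.mpr ⟨by linarith, by linarith⟩, fun y hy => hIoo hxA hy.1⟩
    · obtain ⟨δ, hδ, hdis⟩ := hsep x hxA
      refine ⟨i, Set.Ioo (x - δ) (x + ε), isOpen_Ioo,
        Set.mem_Ioo.mpr ⟨by linarith, by linarith⟩, ?_⟩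
      rintro y ⟨⟨hy1, hy2⟩, hyK⟩
      rcases lt_or_ge y x with hlt | hle
      · exact absurd (Set.mem_inter (Set.mem_Ioo.mpr ⟨hy1, hlt⟩) hyK) (by rw [hdis]; exact Set.notMem_empty y)
      · exact hIco ⟨hle, hy2⟩
  choose idx V hVo hVmem hVsub using hch
  obtain ⟨t, ht⟩ := hK.elim_finite_subcover V hVo
    (fun x hx => Set.mem_iUnion.mpr ⟨⟨x, hx⟩, hVmem ⟨x, hx⟩⟩)
  refine ⟨t.image idx, fun x hx => ?_⟩
  obtain ⟨z, hz⟩ := Set.mem_iUnion.mp (ht hx)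
  obtain ⟨hzt, hxV⟩ := Set.mem_iUnion.mp hz
  refine Set.mem_iUnion.mpr ⟨idx z, Set.mem_iUnion.mpr ⟨Finset.mem_image_of_mem idx hzt, ?_⟩⟩
  exact hVsub z ⟨hxV, hx⟩

/-- the compact pieces -/
def Kpiece (m : ℕ) : Set ℝ :=
  Set.Icc (-(m:ℝ)) m \
    ⋃ p : ℕ × (ℕ → Bool), Set.Ioo (S p.2 p.1 - 1 / 3 ^ p.1 / (m + 1)) (S p.2 p.1)

lemma isCompact_Kpiece_euclid (m : ℕ) : IsCompact (Kpiece m) :=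
  isCompact_Icc.diff (isOpen_iUnion fun _ => isOpen_Ioo)

lemma hsep_Kpiece (m : ℕ) : ∀ b ∉ A1, ∃ δ > 0, Set.Ioo (b - δ) b ∩ Kpiece m = ∅ := by
  intro b hb
  rw [A1, Set.notMem_compl_iff] at hb
  obtain ⟨n, f, hS⟩ := mem_B1_iff.mp hb
  refine ⟨1 / 3 ^ n / (m + 1), by positivity, ?_⟩
  rw [Set.eq_empty_iff_forall_notMem]
  rintro y ⟨hy1, hy2⟩
  refine hy2.2 (Set.mem_iUnion.mpr ⟨(n, f), ?_⟩)
  rw [hS]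
  exact hy1

lemma iUnion_Kpiece : ⋃ m, Kpiece m = Set.univ := by
  rw [Set.eq_univ_iff_forall]
  intro x
  obtain ⟨m₀, hm₀⟩ := factF x
  obtain ⟨M, hM⟩ := exists_nat_ge |x|
  refine Set.mem_iUnion.mpr ⟨max m₀ M, ⟨?_, ?_⟩⟩
  · have h1 : |x| ≤ (max m₀ M : ℕ) := le_trans hM (by exact_mod_cast Nat.cast_le.mpr (le_max_right m₀ M))
    exact abs_le.mp h1
  · intro hmem
    obtain ⟨p, hp⟩ := Set.mem_iUnion.mp hmem
    obtain ⟨hp1, hp2⟩ := hp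
    set m := max m₀ M
    have hkey := hm₀ p.1 p.2 hp2
    have hmm : (m₀ : ℝ) + 1 ≤ (m : ℝ) + 1 := by
      have : (m₀ : ℕ) ≤ m := le_max_left m₀ M
      exact_mod_cast Nat.succ_le_succ this
    have hm1 : (0:ℝ) < (m₀:ℝ) + 1 := by positivity
    have h2 : S p.2 p.1 - x < 1 / 3 ^ p.1 / (m + 1) := by linarith
    have h4 : (1:ℝ) / 3 ^ p.1 / (m + 1) ≤ 1 / 3 ^ p.1 / (m₀ + 1) := by
      gcongr
    have h5 : S p.2 p.1 - x < 1 / 3 ^ p.1 / (m₀ + 1) := lt_of_lt_of_le h2 h4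
    rw [lt_div_iff₀ hm1] at h5
    nlinarith [hkey, h5]

lemma sigmaCompact : @SigmaCompactSpace ℝ (hattori A1) := by
  refine @SigmaCompactSpace.mk ℝ (hattori A1) ⟨Kpiece, fun m => ?_, ?_⟩
  · exact isCompact_hattori A1 (Kpiece m) (isCompact_Kpiece_euclid m) (hsep_Kpiece m)
  · exact iUnion_Kpiece

end HatAux
end

noncomputable section
namespace HatAux

lemma countable_B1 : B1.Countable := by
  have hsub : B1 ⊆ ⋃ n : ℕ, Set.range
      (fun l : Fin n → Bool => S (fun i => if h : i < n then l ⟨i, h⟩ else false) n) := by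
    intro x hx
    obtain ⟨n, f, rfl⟩ := mem_B1_iff.mp hx
    refine Set.mem_iUnion.mpr ⟨n, ⟨fun i : Fin n => f i, ?_⟩⟩
    refine Finset.sum_congr rfl fun i hi => ?_
    have hi' : i < n := Finset.mem_range.mp hi
    simp [dig, hi']
  exact Set.Countable.mono hsub (Set.countable_iUnion fun n => Set.countable_range _)

lemma S_parity (f : ℕ → Bool) (n N : ℕ) (h : n ≤ N) :
    ∃ k : ℕ, (3:ℝ) ^ N * S f n = 2 * k := by
  refine ⟨∑ i ∈ Finset.range n, (if f i then 1 else 0) * 3 ^ (N - i - 1), ?_⟩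
  rw [S, Finset.mul_sum]
  push_cast
  rw [Finset.mul_sum]
  refine Finset.sum_congr rfl fun i hi => ?_
  have hi' : i < n := Finset.mem_range.mp hi
  have he : (3:ℝ) ^ (N - i - 1) * 3 ^ (i + 1) = 3 ^ N := by
    rw [← pow_add]; congr 1; omega
  have h3 : (0:ℝ) < 3 ^ (i+1) := by positivity
  rw [dig]
  split
  · push_cast
    field_simp
    nlinarith [he]
  · push_cast
    simp

lemma not_mem_B1_add (f : ℕ → Bool) (n m : ℕ) (hn : n ≤ m + 1) :
    S f n + 1 / 3 ^ (m+1) ∉ B1 := by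
  intro hmem
  obtain ⟨n', f', hS'⟩ := mem_B1_iff.mp hmem
  set N := max (m+1) n' with hN
  obtain ⟨k1, hk1⟩ := S_parity f n N (le_trans hn (le_max_left _ _))
  obtain ⟨k2, hk2⟩ := S_parity f' n' N (le_max_right _ _)
  have he : (3:ℝ) ^ (N - (m+1)) * 3 ^ (m+1) = 3 ^ N := by
    rw [← pow_add]; congr 1; omega
  have heq : (2 * k2 : ℝ) = 2 * k1 + 3 ^ (N - (m+1)) := by
    rw [← hk2, hS', mul_add, hk1]
    congr 1
    have h3 : (0:ℝ) < 3 ^ (m+1) := by positivity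
    field_simp
    linarith [he]
  have heqn : 2 * k2 = 2 * k1 + 3 ^ (N - (m+1)) := by exact_mod_cast heq
  have hodd : Odd (3 ^ (N - (m+1))) := Odd.pow ⟨1, rfl⟩
  obtain ⟨t, ht⟩ := hodd
  omega

lemma mem_closure_add (f : ℕ → Bool) (n m : ℕ) (hn : n ≤ m + 1) :
    S f n + 1 / 3 ^ (m+1) ∈ closure B1 := by
  set f' : ℕ → Bool := fun i => if i < n then f i else decide (m+1 ≤ i) with hf'
  have hA : ∀ k, S f' (m+1+k) = S f n + ∑ j ∈ Finset.range k, 2 / 3 ^ (j+(m+1)+1) := by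
    intro k
    induction k with
    | zero =>
      simp only [Nat.add_zero, Finset.range_zero, Finset.sum_empty, add_zero]
      rw [S, S]
      rw [← Finset.sum_subset (Finset.range_subset_range.mpr hn)]
      · refine Finset.sum_congr rfl fun i hi => ?_
        have hi' : i < n := Finset.mem_range.mp hi
        simp [dig, hf', hi']
      · intro i hi hni
        have h1 : i < m+1 := Finset.mem_range.mp hi
        have h2 : ¬ i < n := fun h => hni (Finset.mem_range.mpr h)
        simp [dig, hf', h2, Nat.not_le.mpr h1]
        omega
    | succ k ih =>
      rw [show m+1+(k+1) = (m+1+k)+1 by ring, S, Finset.sum_range_succ, ← S, ih,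
        Finset.sum_range_succ]
      have h2 : ¬ (m+1+k) < n := by omega
      have h3 : m+1 ≤ m+1+k := by omega
      simp only [dig, hf', if_neg h2, decide_eq_true_eq]
      rw [if_pos h3, show m+1+k+1 = k+(m+1)+1 by ring]
      ring
  have hsum : HasSum (fun j : ℕ => 2 / (3:ℝ) ^ (j+(m+1)+1)) (1 / 3 ^ (m+1)) := by
    have hsummable : Summable (fun j : ℕ => 2 / (3:ℝ) ^ (j+(m+1)+1)) := by
      have := summable_geo.comp_injective (add_left_injective (m+1))
      simpa [Function.comp_def, show ∀ i, i + (m+1) = i + m + 1 from fun i => by ring] using this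
    have := hsummable.hasSum
    rwa [show ∑' j : ℕ, 2 / (3:ℝ) ^ (j+(m+1)+1) = 1 / 3 ^ (m+1) from ?_] at this
    rw [← tsum_tail m]
    exact tsum_congr fun j => by rw [show j + (m+1) + 1 = j + m + 1 + 1 by ring]
  have htend : Filter.Tendsto (fun k => S f' (m+1+k)) Filter.atTop
      (𝓝 (S f n + 1 / 3 ^ (m+1))) := by
    simp only [hA]
    exact tendsto_const_nhds.add hsum.tendsto_sum_nat
  refine mem_closure_of_tendsto htend (Filter.Eventually.of_forall fun k => ?_)
  exact mem_B1_iff.mpr ⟨m+1+k, f', rfl⟩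

end HatAux
end

noncomputable section
namespace HatAux

lemma isGδ_preimage_subtype {s : Set ℝ} (h : IsGδ s) (D : Set ℝ) :
    IsGδ (Subtype.val ⁻¹' s : Set D) := by
  obtain ⟨T, hTo, hTc, rfl⟩ := h
  rw [Set.preimage_sInter]
  exact IsGδ.biInter hTc fun t ht => ((hTo t ht).preimage continuous_subtype_val).isGδ

lemma not_isGδ_B1 : ¬ IsGδ B1 := by
  intro hGδ
  set D := closure B1 with hDdef
  have hDcl : IsClosed D := isClosed_closure
  haveI : CompleteSpace D := hDcl.completeSpace_coe
  have h0 : (0:ℝ) ∈ B1 := ⟨0, (fun _ => 0), fun _ => Or.inl rfl, by simp⟩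
  haveI : Nonempty D := ⟨⟨0, subset_closure h0⟩⟩
  set B' : Set D := Subtype.val ⁻¹' B1 with hB'def
  have himg : Subtype.val '' B' = D ∩ B1 := Subtype.image_preimage_coe _ _
  have hd1 : Dense B' := by
    intro z
    rw [closure_subtype, himg, Set.inter_eq_right.mpr subset_closure]
    exact z.2
  have hGδ1 : IsGδ B' := isGδ_preimage_subtype hGδ D
  have hcnt : B'.Countable := countable_B1.preimage Subtype.coe_injective
  have hGδ2 : IsGδ B'ᶜ := hcnt.isGδ_compl
  have hd2 : Dense B'ᶜ := by
    intro z
    rw [closure_subtype]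
    have himg2 : Subtype.val '' (B'ᶜ) = B1ᶜ ∩ D := by
      rw [hB'def, ← Set.preimage_compl, Subtype.image_preimage_coe, Set.inter_comm]
    rw [himg2]
    by_cases hz : (z:ℝ) ∈ B1
    · obtain ⟨n, f, hfz⟩ := mem_B1_iff.mp hz
      have htend : Filter.Tendsto (fun k : ℕ => S f n + 1 / 3 ^ (n+k+1)) Filter.atTop
          (𝓝 (z:ℝ)) := by
        rw [← hfz]
        have key : Filter.Tendsto (fun k : ℕ => (1:ℝ) / 3 ^ (n+k+1)) Filter.atTop (𝓝 0) := by
          have hb : ∀ k : ℕ, (0:ℝ) ≤ 1 / 3 ^ (n+k+1) := fun k => by positivity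
          have hb2 : ∀ k : ℕ, (1:ℝ) / 3 ^ (n+k+1) ≤ (1/3) ^ k := by
            intro k
            rw [one_div_pow]
            gcongr
            · norm_num
            · omega
          exact squeeze_zero hb hb2 (tendsto_pow_atTop_nhds_zero_of_lt_one (by norm_num) (by norm_num))
        have := tendsto_const_nhds (x := S f n) (f := Filter.atTop (α := ℕ)) |>.add key
        simpa using this
      refine mem_closure_of_tendsto htend (Filter.Eventually.of_forall fun k => ?_)
      constructor
      · exact not_mem_B1_add f n (n+k) (by omega)
      · exact mem_closure_add f n (n+k) (by omega)
    · exact subset_closure ⟨hz, z.2⟩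
  have m1 : B' ∈ residual D := mem_residual.mpr ⟨B', subset_rfl, hGδ1, hd1⟩
  have m2 : B'ᶜ ∈ residual D := mem_residual.mpr ⟨B'ᶜ, subset_rfl, hGδ2, hd2⟩
  have hbot : (∅ : Set D) ∈ residual D := by
    have := Filter.inter_mem m1 m2
    rwa [Set.inter_compl_self] at this
  obtain ⟨w, hw⟩ := (dense_of_mem_residual hbot).nonempty
  exact hw

end HatAux
end

/-- H(A₁) is σ-compact but B₁ = ℝ \ A₁ is not a G_δ-subset of the Euclidean real line. -/
theorem sigmaCompact_A1_and_B1_not_Gdelta :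
    @SigmaCompactSpace ℝ (hattori A1) ∧ ¬ IsGδ B1 :=
  ⟨HatAux.sigmaCompact, HatAux.not_isGδ_B1⟩
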